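/- Let K be a field of characteristic zero and g a K-algebra whose multiplication [ , ] is skew-symmetric ([x,y] = −[y,x] for all x,y). Let a, b : ℤ → g be distributions forming a local pair. Then a and b satisfy conformal skew-symmetry: for every r ∈ ℕ and every t ∈ ℤ, (a_r b)_t = (−1)^{r+1} Σ_{i≥0} (t choose i) (b_{r+i} a)_{t−i}, where the sum is finite because b_{r+i} a = 0 for all large i by locality. (Equivalently, a_r b = Σ_{i≥0} (−1)^{r+1+i} ∂_z^{(i)}(b_{r+i} a).) -/

import Mathlib

/-- The binomial polynomial `(t choose i) = t(t−1)⋯(t−i+1)/i!`, as an element of `K`. -/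
noncomputable def binomPoly (K : Type*) [Field K] (t : ℤ) (i : ℕ) : K :=
  (∏ k ∈ Finset.range i, ((t : K) - (k : K))) / (Nat.factorial i : K)

section

variable {K : Type*} [Field K] {g : Type*} [AddCommGroup g] [Module K g]

/-- A pair of distributions `a, b` with values in an algebra `(g, br)` is local of
order `≤ n` if `Σ_{k=0}^{n} (−1)^k (n choose k) [a_{t+n−k}, b_{s+k}] = 0` for all `t, s`. -/
def pairLocalOfOrder (br : g →ₗ[K] g →ₗ[K] g) (a b : ℤ → g) (n : ℕ) : Prop :=
  ∀ t s : ℤ, ∑ k ∈ Finset.range (n + 1),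
    ((-1 : ℤ) ^ k * (n.choose k : ℤ)) • br (a (t + (n : ℤ) - (k : ℤ))) (b (s + (k : ℤ))) = 0

/-- The `i`-th product of distributions with values in the algebra `(g, br)`:
`(a_i b)_u = Σ_{k=0}^{i} (−1)^k (i choose k) [a_{i−k}, b_{u+k}]`. -/
def distProd (br : g →ₗ[K] g →ₗ[K] g) (a b : ℤ → g) (i : ℕ) : ℤ → g :=
  fun u => ∑ k ∈ Finset.range (i + 1),
    ((-1 : ℤ) ^ k * (i.choose k : ℤ)) • br (a ((i : ℤ) - (k : ℤ))) (b (u + (k : ℤ)))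

end

/-! ### Auxiliary material -/

section BinomAux
variable {K : Type*} [Field K]

lemma binomPoly_zero_right (t : ℤ) : binomPoly K t 0 = 1 := by
  simp [binomPoly]

lemma binomPoly_zero_left (i : ℕ) : binomPoly K 0 (i+1) = 0 := by
  have h : ∏ k ∈ Finset.range (i+1), (((0:ℤ):K) - (k:K)) = 0 :=
    Finset.prod_eq_zero (Finset.mem_range.2 i.succ_pos) (by simp)
  rw [binomPoly, h, zero_div]

lemma binomPoly_pascal [CharZero K] (t : ℤ) (i : ℕ) :
    binomPoly K (t+1) (i+1) = binomPoly K t (i+1) + binomPoly K t i := by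
  have h1 : (∏ k ∈ Finset.range (i+1), (((t+1:ℤ):K) - (k:K)))
      = ((t:K)+1) * ∏ k ∈ Finset.range i, ((t:K) - k) := by
    rw [Finset.prod_range_succ']
    rw [mul_comm]
    congr 1
    · push_cast; ring
    · apply Finset.prod_congr rfl; intro k _; push_cast; ring
  have h2 : (∏ k ∈ Finset.range (i+1), ((t:K) - (k:K)))
      = (∏ k ∈ Finset.range i, ((t:K) - k)) * ((t:K) - i) := Finset.prod_range_succ _ _
  have hf0 : ((Nat.factorial i : ℕ) : K) ≠ 0 := Nat.cast_ne_zero.2 (Nat.factorial_ne_zero _)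
  have hi1 : ((i:K)+1) ≠ 0 := by
    have : ((i+1 : ℕ) : K) ≠ 0 := Nat.cast_ne_zero.2 (Nat.succ_ne_zero i)
    push_cast at this; exact this
  rw [binomPoly, binomPoly, binomPoly, h1, h2]
  rw [Nat.factorial_succ]
  push_cast
  field_simp
  ring

end BinomAux

/-- The shifted finite-difference sums used to analyse locality. -/
def fdiff {g : Type*} [AddCommGroup g] (u : ℤ → g) (m : ℕ) (s : ℤ) : g :=
  ∑ k ∈ Finset.range (m+1), ((-1:ℤ)^k * (m.choose k : ℤ)) • u (s + (k:ℤ))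

lemma fdiff_succ {g : Type*} [AddCommGroup g] (u : ℤ → g) (m : ℕ) (s : ℤ) :
    fdiff u (m+1) s = fdiff u m s - fdiff u m (s+1) := by
  unfold fdiff
  rw [Finset.sum_range_succ']
  have hterm : ∀ k, ((-1:ℤ)^(k+1) * ((m+1).choose (k+1) : ℤ)) • u (s + ((k+1:ℕ):ℤ))
      = ((-1:ℤ)^(k+1) * (m.choose (k+1) : ℤ)) • u (s + ((k+1:ℕ):ℤ))
        - ((-1:ℤ)^k * (m.choose k : ℤ)) • u ((s+1) + (k:ℤ)) := by
    intro k
    have hc : ((m+1).choose (k+1) : ℤ) = (m.choose k : ℤ) + (m.choose (k+1) : ℤ) := by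
      rw [Nat.choose_succ_succ]; push_cast; ring
    have harg : s + ((k+1:ℕ):ℤ) = (s+1) + (k:ℤ) := by push_cast; ring
    rw [hc, harg, mul_add, add_smul, pow_succ,
        show (-1:ℤ)^k * -1 * (m.choose k:ℤ) = -((-1:ℤ)^k * (m.choose k:ℤ)) by ring,
        neg_smul]
    abel
  rw [Finset.sum_congr rfl (fun k _ => hterm k)]
  rw [Finset.sum_sub_distrib]
  have h2 : ∑ k ∈ Finset.range (m+1), ((-1:ℤ)^(k+1) * (m.choose (k+1) : ℤ)) • u (s + ((k+1:ℕ):ℤ))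
      = (∑ k ∈ Finset.range (m+1), ((-1:ℤ)^k * (m.choose k : ℤ)) • u (s + (k:ℤ)))
        - ((-1:ℤ)^0 * (m.choose 0 : ℤ)) • u (s + ((0:ℕ):ℤ)) := by
    have h := Finset.sum_range_succ' (fun k => ((-1:ℤ)^k * (m.choose k : ℤ)) • u (s + (k:ℤ))) (m+1)
    rw [Finset.sum_range_succ] at h
    have hz : ((-1:ℤ)^(m+1) * (m.choose (m+1) : ℤ)) • u (s + ((m+1:ℕ):ℤ)) = 0 := by
      simp [Nat.choose_succ_self]
    rw [hz, add_zero] at h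
    rw [eq_sub_iff_add_eq]
    exact h.symm
  rw [h2]
  simp only [pow_zero, Nat.choose_zero_right, Nat.cast_zero, Nat.cast_one, one_mul, add_zero]
  abel

lemma fdiff_vanish {g : Type*} [AddCommGroup g] (u : ℤ → g) {n : ℕ}
    (h : ∀ s, fdiff u n s = 0) : ∀ m, n ≤ m → ∀ s, fdiff u m s = 0 := by
  intro m hm
  induction m, hm using Nat.le_induction with
  | base => exact h
  | succ m hm ih => intro s; rw [fdiff_succ, ih s, ih (s+1), sub_zero]

lemma step_sum (K : Type*) [Field K] [CharZero K] {g : Type*} [AddCommGroup g] [Module K g]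
    (N : ℕ) (t : ℤ) (x : ℕ → g) (hx : x N = 0) :
    ∑ i ∈ Finset.range N, ((-1:K)^i * binomPoly K (t+1) i) • x i
      = ∑ i ∈ Finset.range N, ((-1:K)^i * binomPoly K t i) • x i
        - ∑ i ∈ Finset.range N, ((-1:K)^i * binomPoly K t i) • x (i+1) := by
  have hL : ∑ i ∈ Finset.range N, ((-1:K)^i * binomPoly K (t+1) i) • x i
      = ∑ i ∈ Finset.range (N+1), ((-1:K)^i * binomPoly K (t+1) i) • x i := by
    rw [Finset.sum_range_succ, hx, smul_zero, add_zero]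
  have hR1 : ∑ i ∈ Finset.range N, ((-1:K)^i * binomPoly K t i) • x i
      = ∑ i ∈ Finset.range (N+1), ((-1:K)^i * binomPoly K t i) • x i := by
    rw [Finset.sum_range_succ, hx, smul_zero, add_zero]
  have hR2 : ∑ i ∈ Finset.range N, ((-1:K)^i * binomPoly K t i) • x (i+1)
      = ∑ i ∈ Finset.range (N+1),
          (if i = 0 then (0:K) else (-1:K)^(i-1) * binomPoly K t (i-1)) • x i := by
    rw [Finset.sum_range_succ']
    simp
  rw [hL, hR1, hR2, ← Finset.sum_sub_distrib]
  apply Finset.sum_congr rfl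
  intro i _
  rw [← sub_smul]
  congr 1
  cases i with
  | zero => simp [binomPoly_zero_right]
  | succ j =>
    simp only [Nat.succ_ne_zero, if_false, Nat.add_sub_cancel]
    rw [binomPoly_pascal]
    ring

lemma key (K : Type*) [Field K] [CharZero K] {g : Type*} [AddCommGroup g] [Module K g]
    (G : ℕ → ℤ → g) (n N : ℕ)
    (hP : ∀ m (s : ℤ), G (m+1) s = G m s - G m (s+1))
    (hvn : ∀ m, n ≤ m → ∀ s : ℤ, G m s = 0)
    (hvN : ∀ m, N ≤ m → G m 0 = 0) (r : ℕ) (t : ℤ) :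
    G r t = ∑ i ∈ Finset.range N, ((-1:K)^i * binomPoly K t i) • G (r+i) 0 := by
  have main : ∀ d r, n ≤ r + d → ∀ t : ℤ,
      G r t = ∑ i ∈ Finset.range N, ((-1:K)^i * binomPoly K t i) • G (r+i) 0 := by
    intro d
    induction d with
    | zero =>
      intro r hr t
      rw [hvn r (by omega) t]
      symm
      refine Finset.sum_eq_zero fun i _ => ?_
      rw [hvn (r+i) (by omega) 0, smul_zero]
    | succ d ih =>
      intro r hr t
      have hr1 := ih (r+1) (by omega)
      have hx : G (r + N) 0 = 0 := hvN _ (by omega)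
      have hsh : ∀ t' : ℤ, ∑ j ∈ Finset.range N, ((-1:K)^j * binomPoly K t' j) • G (r+1+j) 0
          = ∑ j ∈ Finset.range N, ((-1:K)^j * binomPoly K t' j) • G (r+(j+1)) 0 := by
        intro t'
        refine Finset.sum_congr rfl fun j _ => ?_
        rw [show r+1+j = r+(j+1) by omega]
      induction t using Int.induction_on with
      | zero =>
        cases N with
        | zero => simpa using hvN r (Nat.zero_le _)
        | succ N' =>
          rw [Finset.sum_range_succ']
          simp [binomPoly_zero_left, binomPoly_zero_right]
      | succ i ihp =>
        have h1 : G r ((i:ℤ)+1) = G r i - G (r+1) i := by rw [hP r (i:ℤ)]; abel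
        have hs := step_sum K N (i:ℤ) (fun j => G (r+j) 0) hx
        rw [h1, ihp, hr1 (i:ℤ), hsh, hs]
      | pred i ihn =>
        have h1 : G r (-(i:ℤ) - 1) = G (r+1) (-(i:ℤ)-1) + G r (-(i:ℤ)) := by
          have h2 := hP r (-(i:ℤ)-1)
          rw [show (-(i:ℤ)-1)+1 = -(i:ℤ) by ring] at h2
          rw [h2]; abel
        have hs := step_sum K N (-(i:ℤ)-1) (fun j => G (r+j) 0) hx
        rw [show (-(i:ℤ)-1)+1 = -(i:ℤ) by ring] at hs
        rw [h1, ihn, hr1 (-(i:ℤ)-1), hsh, hs]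
        abel
  exact main n r (by omega) t

section ConvAux
variable {K : Type*} [Field K] {g : Type*} [AddCommGroup g] [Module K g]

lemma zsmul_cast_aux (K : Type*) [Field K] {g : Type*} [AddCommGroup g] [Module K g]
    (j : ℕ) (x : g) : ((-1:ℤ)^j) • x = ((-1:K)^j) • x := by
  rw [← Int.cast_smul_eq_zsmul K]
  norm_num

lemma distProd_rev (br : g →ₗ[K] g →ₗ[K] g) (a b : ℤ → g) (m : ℕ) (w : ℤ) :
    (∑ k ∈ Finset.range (m + 1),
      ((-1 : ℤ) ^ k * (m.choose k : ℤ)) • br (b ((m : ℤ) - (k : ℤ))) (a (w + (k : ℤ))))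
    = (-1:ℤ)^m • fdiff (fun p => br (b p) (a ((m:ℤ) + w - p))) m 0 := by
  unfold fdiff
  rw [Finset.smul_sum, ← Finset.sum_range_reflect]
  apply Finset.sum_congr rfl
  intro k hk
  dsimp only
  have hk' : k ≤ m := by simpa [Nat.lt_succ_iff] using hk
  simp only [Nat.add_sub_cancel]
  rw [Nat.choose_symm hk', Nat.cast_sub hk']
  have h2 : ((-1:ℤ)^k) * ((-1:ℤ)^k) = 1 := by
    rw [← pow_add]; exact Even.neg_one_pow ⟨k, rfl⟩
  have hsg : ((-1:ℤ))^(m-k) = (-1:ℤ)^m * (-1:ℤ)^k := by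
    calc (-1:ℤ)^(m-k) = (-1:ℤ)^(m-k) * (((-1:ℤ)^k) * ((-1:ℤ)^k)) := by rw [h2, mul_one]
      _ = ((-1:ℤ)^(m-k) * (-1:ℤ)^k) * (-1:ℤ)^k := by ring
      _ = (-1:ℤ)^m * (-1:ℤ)^k := by rw [← pow_add, Nat.sub_add_cancel hk']
  rw [show (m:ℤ) - ((m:ℤ) - (k:ℤ)) = (0:ℤ) + (k:ℤ) by ring,
      show w + ((m:ℤ) - (k:ℤ)) = (m:ℤ) + w - ((0:ℤ) + (k:ℤ)) by ring,
      smul_smul]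
  congr 1
  rw [hsg]; ring

lemma distProd_skew (br : g →ₗ[K] g →ₗ[K] g) (hskew : ∀ x y : g, br x y = - br y x)
    (a b : ℤ → g) (r : ℕ) (t : ℤ) :
    (∑ k ∈ Finset.range (r + 1),
      ((-1 : ℤ) ^ k * (r.choose k : ℤ)) • br (a ((r : ℤ) - (k : ℤ))) (b (t + (k : ℤ))))
    = - fdiff (fun p => br (b p) (a ((r:ℤ) + t - p))) r t := by
  unfold fdiff
  rw [← Finset.sum_neg_distrib]
  apply Finset.sum_congr rfl
  intro k _
  dsimp only
  rw [show (r:ℤ) + t - (t + (k:ℤ)) = (r:ℤ) - (k:ℤ) by ring,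
      hskew (a ((r:ℤ) - (k:ℤ))) (b (t + (k:ℤ))), smul_neg]

end ConvAux

/-- Local pairs of distributions with values in a skew-symmetric algebra satisfy
conformal skew-symmetry: `(a_r b)_t = (−1)^{r+1} Σ_{i≥0} (t choose i) (b_{r+i} a)_{t−i}`,
where the sum is finite since `b_{r+i} a = 0` for all large `i` by locality
(the truncation at any such bound `N` gives the value of the sum). -/
theorem local_pair_conformal_skew_symmetry
    (K : Type*) [Field K] [CharZero K]
    (g : Type*) [AddCommGroup g] [Module K g]
    (br : g →ₗ[K] g →ₗ[K] g)
    (hskew : ∀ x y : g, br x y = - br y x)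
    (a b : ℤ → g)
    (hloc : ∃ n : ℕ, pairLocalOfOrder br a b n) :
    (∃ N : ℕ, ∀ m : ℕ, N ≤ m → ∀ u : ℤ, distProd br b a m u = 0) ∧
    (∀ N : ℕ, (∀ m : ℕ, N ≤ m → ∀ u : ℤ, distProd br b a m u = 0) →
      ∀ (r : ℕ) (t : ℤ),
        distProd br a b r t =
          (-1 : ℤ) ^ (r + 1) •
            ∑ i ∈ Finset.range N, binomPoly K t i • distProd br b a (r + i) (t - (i : ℤ))) := by
  obtain ⟨n, hl⟩ := hloc
  have hbase : ∀ T s : ℤ, fdiff (fun p => br (b p) (a (T - p))) n s = 0 := by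
    intro T s
    have h := hl (T - s - n) s
    have he : fdiff (fun p => br (b p) (a (T - p))) n s
        = - ∑ k ∈ Finset.range (n+1), ((-1:ℤ)^k * (n.choose k : ℤ)) •
            br (a (T - s - (n:ℤ) + (n:ℤ) - (k:ℤ))) (b (s + (k:ℤ))) := by
      unfold fdiff
      rw [← Finset.sum_neg_distrib]
      apply Finset.sum_congr rfl
      intro k _
      dsimp only
      rw [show T - s - (n:ℤ) + (n:ℤ) - (k:ℤ) = T - (s + (k:ℤ)) by ring,
          hskew (a (T - (s + (k:ℤ)))) (b (s + (k:ℤ))), smul_neg, neg_neg]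
    rw [he, h, neg_zero]
  have hvanT : ∀ (T : ℤ) m, n ≤ m → ∀ s, fdiff (fun p => br (b p) (a (T - p))) m s = 0 :=
    fun T => fdiff_vanish _ (hbase T)
  constructor
  · refine ⟨n, fun m hm w => ?_⟩
    simp only [distProd]
    rw [distProd_rev br a b m w, hvanT ((m:ℤ) + w) m hm 0, smul_zero]
  · intro N hN r t
    have hvN : ∀ m, N ≤ m → fdiff (fun p => br (b p) (a ((r:ℤ) + t - p))) m 0 = 0 := by
      intro m hm
      have h := hN m hm ((r:ℤ) + t - (m:ℤ))
      simp only [distProd] at h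
      rw [distProd_rev br a b m ((r:ℤ) + t - (m:ℤ))] at h
      simp only [show (m:ℤ) + ((r:ℤ) + t - (m:ℤ)) = (r:ℤ) + t by ring] at h
      have h2 := congrArg (fun y : g => ((-1:ℤ)^m) • y) h
      simpa [smul_smul, ← pow_add, Even.neg_one_pow (⟨m, rfl⟩ : Even (m+m))] using h2
    have hkey := key K (fun m s => fdiff (fun p => br (b p) (a ((r:ℤ) + t - p))) m s) n N
      (fun m s => fdiff_succ _ m s) (fun m hm s => hvanT ((r:ℤ) + t) m hm s) hvN r t
    have hterm : ∀ i ∈ Finset.range N, binomPoly K t i • distProd br b a (r+i) (t - (i:ℤ))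
        = binomPoly K t i •
            (((-1:ℤ)^(r+i)) • fdiff (fun p => br (b p) (a ((r:ℤ) + t - p))) (r+i) 0) := by
      intro i _
      congr 1
      simp only [distProd]
      rw [distProd_rev br a b (r+i) (t - (i:ℤ))]
      simp only [show (((r+i:ℕ)):ℤ) + (t - (i:ℤ)) = (r:ℤ) + t by push_cast; ring]
    calc distProd br a b r t
        = - fdiff (fun p => br (b p) (a ((r:ℤ) + t - p))) r t := by
          simp only [distProd]
          exact distProd_skew br hskew a b r t
      _ = - ∑ i ∈ Finset.range N, ((-1:K)^i * binomPoly K t i) •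
            fdiff (fun p => br (b p) (a ((r:ℤ) + t - p))) (r+i) 0 := by rw [hkey]
      _ = (-1 : ℤ) ^ (r + 1) •
            ∑ i ∈ Finset.range N, binomPoly K t i • distProd br b a (r + i) (t - (i : ℤ)) := by
          rw [Finset.sum_congr rfl hterm, Finset.smul_sum, ← Finset.sum_neg_distrib]
          apply Finset.sum_congr rfl
          intro i _
          rw [zsmul_cast_aux K (r+i), zsmul_cast_aux K (r+1),
              smul_smul, smul_smul, ← neg_smul]
          congr 1
          have hpow : ((-1:K))^(r+1) * ((-1:K))^(r+i) = -((-1:K))^i := by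
            rw [← pow_add, show (r+1)+(r+i) = 2*r + i + 1 by ring, pow_succ, pow_add,
                pow_mul, neg_one_sq, one_pow, one_mul]
            ring
          rw [show ((-1:K))^(r+1) * binomPoly K t i * (-1:K)^(r+i)
                = (((-1:K))^(r+1) * ((-1:K))^(r+i)) * binomPoly K t i by ring, hpow]
          ring
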